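/- For (m,ρ) in A and n ≥ 3, Z_n(mn, ρn) ≥ (1/2)·n·(((ρ+m)n/2)^(n-2))/((n-2)!), and consequently liminf_{n→∞} (1/n) log Z_n(mn, ρn) ≥ 1 + log((ρ+m)/2). -/

import Mathlib

open scoped Nat
open Filter

/-- The microcanonical partition function `Z_n(M,N)` of the orthoplicial model. -/
noncomputable def Zorth (n : ℕ) (M N : ℝ) : ℝ :=
  (1/2) * ∑ k ∈ Finset.Ico 1 n,
    (n.choose k : ℝ) * (((N + M)/2) ^ (k - 1) / ((k - 1)! : ℝ)) *
      (((N - M)/2) ^ (n - k - 1) / ((n - k - 1)! : ℝ))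

lemma fact_ub' : ∀ n : ℕ, 1 ≤ n → (n ! : ℝ) ≤ Real.exp 1 * n ^ (n+1) * Real.exp (-(n:ℝ)) := by
  intro n hn
  induction n with
  | zero => omega
  | succ n ih =>
    rcases Nat.eq_or_lt_of_le hn with h | h
    · simp [← h, Real.exp_neg]
    · have hn1 : 1 ≤ n := by omega
      have ihn := ih hn1
      have hnpos : (0:ℝ) < n := by exact_mod_cast hn1
      have h4 : (n:ℝ)^(n+1) ≤ Real.exp (-1) * ((n:ℝ)+1)^(n+1) := by
        have h1 : (n:ℝ)/((n:ℝ)+1) ≤ Real.exp (-(1/((n:ℝ)+1))) := by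
          have h0 := Real.add_one_le_exp (-(1/((n:ℝ)+1)))
          have heq : (n:ℝ)/((n:ℝ)+1) = -(1/((n:ℝ)+1)) + 1 := by field_simp; ring
          linarith [heq ▸ h0]
        have h2 : ((n:ℝ)/((n:ℝ)+1)) ^ (n+1) ≤ (Real.exp (-(1/((n:ℝ)+1)))) ^ (n+1) :=
          pow_le_pow_left₀ (by positivity) h1 _
        have h3 : (Real.exp (-(1/((n:ℝ)+1)))) ^ (n+1) = Real.exp (-1) := by
          rw [← Real.exp_nat_mul]; congr 1; field_simp; simp
        rw [h3, div_pow] at h2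
        rw [div_le_iff₀ (by positivity)] at h2
        linarith
      have hfac : ((n+1)! : ℝ) = ((n:ℝ)+1) * (n ! : ℝ) := by
        push_cast [Nat.factorial_succ]; ring
      have goal : ((n+1)! : ℝ) ≤ Real.exp 1 * ((n:ℝ)+1) ^ (n+2) * Real.exp (-((n:ℝ)+1)) := by
        rw [hfac]
        calc ((n:ℝ)+1) * (n ! : ℝ)
            ≤ ((n:ℝ)+1) * (Real.exp 1 * (n:ℝ) ^ (n+1) * Real.exp (-(n:ℝ))) :=
              mul_le_mul_of_nonneg_left ihn (by positivity)
          _ ≤ ((n:ℝ)+1) * (Real.exp 1 * (Real.exp (-1) * ((n:ℝ)+1)^(n+1)) * Real.exp (-(n:ℝ))) := by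
              apply mul_le_mul_of_nonneg_left _ (by positivity)
              apply mul_le_mul_of_nonneg_right _ (Real.exp_pos _).le
              exact mul_le_mul_of_nonneg_left h4 (Real.exp_pos _).le
          _ = Real.exp 1 * ((n:ℝ)+1) ^ (n+2) * Real.exp (-((n:ℝ)+1)) := by
              have e1 : Real.exp (-(1:ℝ)) = (Real.exp 1)⁻¹ := Real.exp_neg 1
              have e2 : Real.exp (-((n:ℝ)+1)) = Real.exp (-(n:ℝ)) * (Real.exp 1)⁻¹ := by
                rw [← e1, ← Real.exp_add]; ring_nf
              rw [e1, e2, show n+2 = (n+1)+1 from rfl, pow_succ]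
              have hepos := Real.exp_pos (1:ℝ)
              field_simp
              ring
      convert goal using 3 <;> push_cast <;> ring

lemma Z_ge (m ρ : ℝ) (hρ : 0 < ρ) (hm : |m| < ρ) (n : ℕ) (hn : 3 ≤ n) :
    Zorth n (m * n) (ρ * n) ≥ (1/2) * n * ((ρ + m) * n / 2) ^ (n - 2) / ((n - 2)! : ℝ) := by
  obtain ⟨h1, h2⟩ := abs_lt.mp hm
  have hx : (0:ℝ) ≤ (ρ * n + m * n)/2 := by
    have hpm : (0:ℝ) ≤ ρ + m := by linarith
    have : (ρ * n + m * n)/2 = (ρ + m) * n / 2 := by ring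
    rw [this]
    exact div_nonneg (mul_nonneg hpm n.cast_nonneg) (by norm_num)
  have hy : (0:ℝ) ≤ (ρ * n - m * n)/2 := by
    have : (ρ * n - m * n)/2 = (ρ - m) * n / 2 := by ring
    have hrm : (0:ℝ) ≤ ρ - m := by linarith
    rw [this]
    exact div_nonneg (mul_nonneg hrm n.cast_nonneg) (by norm_num)
  have hterm : ∀ k ∈ Finset.Ico 1 n, (0:ℝ) ≤
      (n.choose k : ℝ) * (((ρ * n + m * n)/2) ^ (k - 1) / ((k - 1)! : ℝ)) *
        (((ρ * n - m * n)/2) ^ (n - k - 1) / ((n - k - 1)! : ℝ)) := by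
    intro k _; positivity
  have hmem : n - 1 ∈ Finset.Ico 1 n := by
    simp only [Finset.mem_Ico]; omega
  have hsingle := Finset.single_le_sum hterm hmem
  have hch : (n.choose (n-1) : ℝ) = n := by
    have : n.choose (n - 1) = n.choose 1 := by
      have := Nat.choose_symm (show 1 ≤ n by omega)
      simpa using this
    rw [this, Nat.choose_one_right]
  have e1 : n - 1 - 1 = n - 2 := by omega
  have e2 : n - (n - 1) - 1 = 0 := by omega
  rw [hch, e1, e2] at hsingle
  simp only [pow_zero, Nat.factorial_zero, Nat.cast_one, div_one, mul_one] at hsingle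
  have : Zorth n (m * n) (ρ * n) ≥
      (1/2) * ((n:ℝ) * (((ρ * n + m * n)/2) ^ (n - 2) / ((n - 2)! : ℝ))) := by
    unfold Zorth
    have := mul_le_mul_of_nonneg_left hsingle (by norm_num : (0:ℝ) ≤ 1/2)
    exact this
  have heq : (ρ * (n:ℝ) + m * n)/2 = (ρ + m) * n / 2 := by ring
  rw [heq] at this
  calc (1/2) * (n:ℝ) * ((ρ + m) * n / 2) ^ (n - 2) / ((n - 2)! : ℝ)
      = (1/2) * ((n:ℝ) * (((ρ + m) * n / 2) ^ (n - 2) / ((n - 2)! : ℝ))) := by ring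
    _ ≤ Zorth n (m * n) (ρ * n) := this

-- upper bound
lemma Z_ub (m ρ : ℝ) (hρ : 0 < ρ) (hm : |m| < ρ) (n : ℕ) :
    Zorth n (m * n) (ρ * n) ≤ n * 2 ^ n * Real.exp (ρ * n) := by
  obtain ⟨h1, h2⟩ := abs_lt.mp hm
  have hx : (0:ℝ) ≤ (ρ * n + m * n)/2 := by
    have hpm : (0:ℝ) ≤ ρ + m := by linarith
    have : (ρ * n + m * n)/2 = (ρ + m) * n / 2 := by ring
    rw [this]
    exact div_nonneg (mul_nonneg hpm n.cast_nonneg) (by norm_num)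
  have hy : (0:ℝ) ≤ (ρ * n - m * n)/2 := by
    have h3 : (0:ℝ) ≤ ρ - m := by linarith
    have : (ρ * n - m * n)/2 = (ρ - m) * n / 2 := by ring
    rw [this]
    exact div_nonneg (mul_nonneg h3 n.cast_nonneg) (by norm_num)
  have hterm : ∀ k ∈ Finset.Ico 1 n,
      (n.choose k : ℝ) * (((ρ * n + m * n)/2) ^ (k - 1) / ((k - 1)! : ℝ)) *
        (((ρ * n - m * n)/2) ^ (n - k - 1) / ((n - k - 1)! : ℝ)) ≤
      2 ^ n * Real.exp (ρ * n) := by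
    intro k hk
    rw [Finset.mem_Ico] at hk
    have hch : (n.choose k : ℝ) ≤ 2 ^ n := by
      have h2n : n.choose k ≤ 2 ^ n := by
        calc n.choose k ≤ ∑ i ∈ Finset.range (n+1), n.choose i :=
              Finset.single_le_sum (fun i _ => Nat.zero_le _)
                (Finset.mem_range.2 (by omega))
          _ = 2 ^ n := Nat.sum_range_choose n
      exact_mod_cast h2n
    have hA := Real.pow_div_factorial_le_exp _ hx (k - 1)
    have hB := Real.pow_div_factorial_le_exp _ hy (n - k - 1)
    calc (n.choose k : ℝ) * (((ρ * n + m * n)/2) ^ (k - 1) / ((k - 1)! : ℝ)) *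
          (((ρ * n - m * n)/2) ^ (n - k - 1) / ((n - k - 1)! : ℝ))
        ≤ 2 ^ n * Real.exp ((ρ * n + m * n)/2) * Real.exp ((ρ * n - m * n)/2) := by
          gcongr <;> positivity
      _ = 2 ^ n * Real.exp (ρ * n) := by
          rw [mul_assoc, ← Real.exp_add]
          congr 1
          ring
  have hsum := Finset.sum_le_sum hterm
  rw [Finset.sum_const, Nat.card_Ico] at hsum
  unfold Zorth
  have hcard : ((n - 1 : ℕ) : ℝ) ≤ (n : ℝ) := by
    have : (n - 1 : ℕ) ≤ n := by omega
    exact_mod_cast this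
  have hC : (0:ℝ) ≤ 2 ^ n * Real.exp (ρ * n) := by positivity
  calc (1/2) * ∑ k ∈ Finset.Ico 1 n,
        (n.choose k : ℝ) * (((ρ * n + m * n)/2) ^ (k - 1) / ((k - 1)! : ℝ)) *
          (((ρ * n - m * n)/2) ^ (n - k - 1) / ((n - k - 1)! : ℝ))
      ≤ (1/2) * ((n - 1 : ℕ) • (2 ^ n * Real.exp (ρ * n))) :=
        mul_le_mul_of_nonneg_left hsum (by norm_num)
    _ = (1/2) * (((n - 1 : ℕ) : ℝ) * (2 ^ n * Real.exp (ρ * n))) := by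
        rw [nsmul_eq_mul]
    _ ≤ (n:ℝ) * 2 ^ n * Real.exp (ρ * n) := by
        have := mul_le_mul_of_nonneg_right hcard hC
        nlinarith [this, hC, mul_nonneg (Nat.cast_nonneg (n-1) : (0:ℝ) ≤ _) hC]

/-- Lower bound for the microcanonical partition function and the resulting liminf bound
on the microcanonical entropy. -/
theorem Zorth_lower_bound (m ρ : ℝ) (hρ : 0 < ρ) (hm : |m| < ρ) :
    (∀ n : ℕ, 3 ≤ n →
        Zorth n (m * n) (ρ * n) ≥ (1/2) * n * ((ρ + m) * n / 2) ^ (n - 2) / ((n - 2)! : ℝ)) ∧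
    liminf (fun n : ℕ => (1/(n:ℝ)) * Real.log (Zorth n (m * n) (ρ * n))) atTop ≥
      1 + Real.log ((ρ + m)/2) := by
  obtain ⟨h1, h2⟩ := abs_lt.mp hm
  have hc : (0:ℝ) < (ρ + m)/2 := by linarith
  set c : ℝ := (ρ + m)/2 with hcdef
  refine ⟨fun n hn => Z_ge m ρ hρ hm n hn, ?_⟩
  -- lower bound on Zorth via exp form
  have hZexp : ∀ n : ℕ, 3 ≤ n →
      (1/2) * c ^ (n-2) * Real.exp ((n:ℝ) - 3) ≤ Zorth n (m * n) (ρ * n) := by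
    intro n hn
    have hge := Z_ge m ρ hρ hm n hn
    have hnR : (3:ℝ) ≤ (n:ℝ) := by exact_mod_cast hn
    have hn0 : (0:ℝ) < n := by linarith
    -- factorial bound
    have hfb := fact_ub' (n - 2) (by omega)
    have hcast : ((n - 2 : ℕ) : ℝ) = (n:ℝ) - 2 := by
      have : (2:ℕ) ≤ n := by omega
      push_cast [this]; ring
    rw [hcast] at hfb
    have hexp1 : (n - 2) + 1 = n - 1 := by omega
    rw [hexp1] at hfb
    have hpow : ((n:ℝ) - 2) ^ (n-1) ≤ (n:ℝ) ^ (n-1) :=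
      pow_le_pow_left₀ (by linarith) (by linarith) _
    have hD : ((n-2)! : ℝ) ≤ Real.exp 1 * (n:ℝ) ^ (n-1) * Real.exp (-((n:ℝ)-2)) := by
      calc ((n-2)! : ℝ) ≤ Real.exp 1 * ((n:ℝ)-2) ^ (n-1) * Real.exp (-((n:ℝ)-2)) := hfb
        _ ≤ Real.exp 1 * (n:ℝ) ^ (n-1) * Real.exp (-((n:ℝ)-2)) := by
            gcongr
    have hDpos : (0:ℝ) < ((n-2)! : ℝ) := by
      exact_mod_cast Nat.factorial_pos (n-2)
    have hpm : (0:ℝ) ≤ (ρ + m) * n / 2 :=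
      div_nonneg (mul_nonneg (by linarith) n.cast_nonneg) (by norm_num)
    have hApos : (0:ℝ) ≤ (1/2) * (n:ℝ) * ((ρ + m) * n / 2) ^ (n-2) :=
      mul_nonneg (mul_nonneg (by norm_num) n.cast_nonneg) (pow_nonneg hpm _)
    have hkey : (1/2) * (n:ℝ) * ((ρ + m) * n / 2) ^ (n-2) /
        (Real.exp 1 * (n:ℝ) ^ (n-1) * Real.exp (-((n:ℝ)-2))) ≤
        (1/2) * (n:ℝ) * ((ρ + m) * n / 2) ^ (n-2) / ((n-2)! : ℝ) :=
      div_le_div_of_nonneg_left hApos hDpos hD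
    have heq : (1/2) * (n:ℝ) * ((ρ + m) * n / 2) ^ (n-2) /
        (Real.exp 1 * (n:ℝ) ^ (n-1) * Real.exp (-((n:ℝ)-2))) =
        (1/2) * c ^ (n-2) * Real.exp ((n:ℝ) - 3) := by
      have hDpos' : (0:ℝ) < Real.exp 1 * (n:ℝ) ^ (n-1) * Real.exp (-((n:ℝ)-2)) := by
        positivity
      rw [div_eq_iff (ne_of_gt hDpos')]
      symm
      have hexp : Real.exp ((n:ℝ) - 3) * (Real.exp 1 * Real.exp (-((n:ℝ)-2))) = 1 := by
        rw [← Real.exp_add, ← Real.exp_add]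
        rw [show (n:ℝ) - 3 + (1 + -((n:ℝ) - 2)) = 0 by ring, Real.exp_zero]
      have hcn : (ρ + m) * (n:ℝ) / 2 = c * n := by rw [hcdef]; ring
      have hnn : (n:ℝ) * (n:ℝ) ^ (n-2) = (n:ℝ) ^ (n-1) := by
        have hsucc : n - 2 + 1 = n - 1 := by omega
        rw [← pow_succ', hsucc]
      calc (1/2) * c ^ (n-2) * Real.exp ((n:ℝ) - 3) *
            (Real.exp 1 * (n:ℝ) ^ (n-1) * Real.exp (-((n:ℝ)-2)))
          = (1/2) * c ^ (n-2) * (n:ℝ) ^ (n-1) *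
            (Real.exp ((n:ℝ) - 3) * (Real.exp 1 * Real.exp (-((n:ℝ)-2)))) := by ring
        _ = (1/2) * c ^ (n-2) * (n:ℝ) ^ (n-1) := by rw [hexp, mul_one]
        _ = (1/2) * (n:ℝ) * ((ρ + m) * n / 2) ^ (n-2) := by
            rw [hcn, mul_pow, ← hnn]; ring
    linarith [heq ▸ hkey, hge]
  -- positivity of Zorth
  have hZpos : ∀ n : ℕ, 3 ≤ n → (0:ℝ) < Zorth n (m * n) (ρ * n) := by
    intro n hn
    have := hZexp n hn
    have : (0:ℝ) < (1/2) * c ^ (n-2) * Real.exp ((n:ℝ) - 3) := by positivity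
    linarith [hZexp n hn]
  -- lower estimate function
  set f : ℕ → ℝ := fun n =>
    (Real.log (1/2) + ((n:ℝ) - 2) * Real.log c + ((n:ℝ) - 3)) / n with hfdef
  have hfa : ∀ᶠ n in atTop, f n ≤ (1/(n:ℝ)) * Real.log (Zorth n (m * n) (ρ * n)) := by
    filter_upwards [eventually_ge_atTop 3] with n hn
    have hn0 : (0:ℝ) < n := by
      have : (3:ℝ) ≤ n := by exact_mod_cast hn
      linarith
    have hlog : Real.log ((1/2) * c ^ (n-2) * Real.exp ((n:ℝ) - 3)) ≤
        Real.log (Zorth n (m * n) (ρ * n)) :=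
      Real.log_le_log (by positivity) (hZexp n hn)
    have hlogeq : Real.log ((1/2) * c ^ (n-2) * Real.exp ((n:ℝ) - 3)) =
        Real.log (1/2) + ((n:ℝ) - 2) * Real.log c + ((n:ℝ) - 3) := by
      rw [Real.log_mul (by positivity) (by positivity),
        Real.log_mul (by norm_num) (by positivity), Real.log_pow, Real.log_exp]
      have : ((n - 2 : ℕ) : ℝ) = (n:ℝ) - 2 := by
        have h2n : (2:ℕ) ≤ n := by omega
        push_cast [h2n]; ring
      rw [this]
    rw [hlogeq] at hlog
    have := mul_le_mul_of_nonneg_left hlog (by positivity : (0:ℝ) ≤ 1/(n:ℝ))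
    calc f n = (1/(n:ℝ)) * (Real.log (1/2) + ((n:ℝ) - 2) * Real.log c + ((n:ℝ) - 3)) := by
          rw [hfdef]; field_simp
      _ ≤ (1/(n:ℝ)) * Real.log (Zorth n (m * n) (ρ * n)) := this
  -- tendsto of f
  have hT : Tendsto (fun n : ℕ => 1/(n:ℝ)) atTop (nhds 0) :=
    tendsto_one_div_atTop_nhds_zero_nat
  have hftend : Tendsto f atTop (nhds (1 + Real.log c)) := by
    have hgeq : f =ᶠ[atTop] fun n : ℕ =>
        Real.log (1/2) * (1/(n:ℝ)) + (1 - 2 * (1/(n:ℝ))) * Real.log c +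
          (1 - 3 * (1/(n:ℝ))) := by
      filter_upwards [eventually_ge_atTop 1] with n hn
      have hn0 : (n:ℝ) ≠ 0 := by
        have : (1:ℝ) ≤ n := by exact_mod_cast hn
        linarith
      rw [hfdef]
      field_simp
    have : Tendsto (fun n : ℕ =>
        Real.log (1/2) * (1/(n:ℝ)) + (1 - 2 * (1/(n:ℝ))) * Real.log c +
          (1 - 3 * (1/(n:ℝ)))) atTop
        (nhds (Real.log (1/2) * 0 + (1 - 2 * 0) * Real.log c + (1 - 3 * 0))) := by
      exact (((hT.const_mul _).add
        (((tendsto_const_nhds.sub (hT.const_mul 2)).mul_const _))).add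
        (tendsto_const_nhds.sub (hT.const_mul 3)))
    rw [show Real.log (1/2) * 0 + (1 - 2 * 0) * Real.log c + (1 - 3 * 0)
        = 1 + Real.log c by ring] at this
    exact Tendsto.congr' hgeq.symm this
  -- upper boundedness for coboundedness
  have hub : ∀ᶠ n : ℕ in atTop,
      (1/(n:ℝ)) * Real.log (Zorth n (m * n) (ρ * n)) ≤ 1 + Real.log 2 + ρ := by
    filter_upwards [eventually_ge_atTop 3] with n hn
    have hnR : (3:ℝ) ≤ (n:ℝ) := by exact_mod_cast hn
    have hn0 : (0:ℝ) < n := by linarith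
    have hZu := Z_ub m ρ hρ hm n
    have hlog : Real.log (Zorth n (m * n) (ρ * n)) ≤
        Real.log ((n:ℝ) * 2 ^ n * Real.exp (ρ * n)) :=
      Real.log_le_log (hZpos n hn) hZu
    have hlogeq : Real.log ((n:ℝ) * 2 ^ n * Real.exp (ρ * n)) =
        Real.log n + n * Real.log 2 + ρ * n := by
      rw [Real.log_mul (by positivity) (by positivity),
        Real.log_mul (by positivity) (by positivity), Real.log_pow, Real.log_exp]
    rw [hlogeq] at hlog
    have hlogn : Real.log (n:ℝ) ≤ (n:ℝ) := by
      have := Real.log_le_sub_one_of_pos hn0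
      linarith
    have := mul_le_mul_of_nonneg_left hlog (by positivity : (0:ℝ) ≤ 1/(n:ℝ))
    calc (1/(n:ℝ)) * Real.log (Zorth n (m * n) (ρ * n))
        ≤ (1/(n:ℝ)) * (Real.log n + n * Real.log 2 + ρ * n) := this
      _ = Real.log n / n + Real.log 2 + ρ := by field_simp
      _ ≤ 1 + Real.log 2 + ρ := by
          have : Real.log n / n ≤ 1 := by
            rw [div_le_one hn0]; exact hlogn
          linarith
  -- conclude
  have hlimf : liminf f atTop = 1 + Real.log c := hftend.liminf_eq
  have hbdd : IsBoundedUnder (· ≥ ·) atTop f := hftend.isBoundedUnder_ge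
  have hcob : IsCoboundedUnder (· ≥ ·) atTop
      (fun n : ℕ => (1/(n:ℝ)) * Real.log (Zorth n (m * n) (ρ * n))) :=
    (isBoundedUnder_of_eventually_le hub).isCoboundedUnder_ge
  have := Filter.liminf_le_liminf hfa hbdd hcob
  rw [hlimf] at this
  exact this
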